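/- Let P = {s, s+d, s+2d, ..., s+ℓd} be an arithmetic progression with common difference d and length ℓ, let d' be a proper divisor of d (1 ≤ d' < d), and let Q be a set containing integers q_0, ..., q_{d/d' − 1} such that for some integer s_q, q_i ≡ s_q + i·d' (mod d) for every i. Let h_max and h_min be integers with h_max ≥ max_i ⌊(q_i − s_q)/d⌋ and h_min ≤ min_i ⌊(q_i − s_q)/d⌋. Then the arithmetic progression {s', s'+d', ..., s'+ℓ'd'} is contained in the sumset P + Q, where s' = s + s_q + h_max·d and ℓ' = (ℓ − h_max + h_min)·(d/d'). -/
import Mathlib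


open Pointwise

/-- Greedy sumset: sums a + b where b fits strictly below the gap to the next element of A. -/
def greedySum (A B : Set ℤ) : Set ℤ :=
  {z | ∃ a ∈ A, ∃ b ∈ B, 0 ≤ b ∧ z = a + b ∧ ∀ a' ∈ A, a' ≤ a + b → a' ≤ a}

/-- Density of a set of integers over the interval [1, z]. -/
noncomputable def dens (z : ℕ) (S : Set ℤ) : ℝ :=
  sInf {r : ℝ | ∃ z' : ℕ, 1 ≤ z' ∧ z' ≤ z ∧ r = (S ∩ Set.Icc 1 (z' : ℤ)).ncard / z'}

/-- k-fold greedy sumset. -/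
def kGreedy : ℕ → Set ℤ → Set ℤ
  | 0, _ => {0}
  | k + 1, A => greedySum A (kGreedy k A)

/-- k-fold sumset. -/
def kFold : ℕ → Set ℤ → Set ℤ
  | 0, _ => {0}
  | k + 1, A => A + kFold k A

theorem stmt7 (s d d' sq hmax hmin : ℤ) (ℓ : ℤ) (hℓ : 0 ≤ ℓ)
    (hd'1 : 1 ≤ d') (hd'd : d' < d) (hdvd : d' ∣ d)
    (Q : Set ℤ) (q : ℤ → ℤ)
    (hq : ∀ i : ℤ, 0 ≤ i → i ≤ d / d' - 1 → q i ∈ Q ∧ q i ≡ sq + i * d' [ZMOD d])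
    (hmax' : ∀ i : ℤ, 0 ≤ i → i ≤ d / d' - 1 → Int.fdiv (q i - sq) d ≤ hmax)
    (hmin' : ∀ i : ℤ, 0 ≤ i → i ≤ d / d' - 1 → hmin ≤ Int.fdiv (q i - sq) d)
    (hlen : 0 ≤ ℓ - hmax + hmin) :
    ∀ j : ℤ, 0 ≤ j → j ≤ (ℓ - hmax + hmin) * (d / d') →
      s + sq + hmax * d + j * d' ∈ {x : ℤ | ∃ i : ℤ, 0 ≤ i ∧ i ≤ ℓ ∧ x = s + i * d} + Q := by

  intro j hj0 hj1
  set m := d / d' with hm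
  have hd'pos : 0 < d' := hd'1
  have hdm : d = d' * m := ((Int.ediv_mul_cancel hdvd).symm).trans (mul_comm _ _)
  have hmpos : 0 < m := by nlinarith [mul_pos hd'pos (show (0:ℤ) < m from by nlinarith)]
  set a := j / m with ha
  set i := j % m with hi
  have hi0 : 0 ≤ i := Int.emod_nonneg j (by positivity)
  have him : i < m := Int.emod_lt_of_pos j hmpos
  have hja : j = m * a + i := (Int.mul_ediv_add_emod j m).symm
  have ha0 : 0 ≤ a := Int.ediv_nonneg hj0 hmpos.le
  have haL : a ≤ ℓ - hmax + hmin := by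
    have h1 : a * m ≤ (ℓ - hmax + hmin) * m := by nlinarith
    exact le_of_mul_le_mul_right h1 hmpos
  have hib : i ≤ d / d' - 1 := by omega
  obtain ⟨hqQ, hqmod⟩ := hq i hi0 hib
  obtain ⟨c, hc⟩ := (Int.ModEq.dvd (Int.ModEq.symm hqmod))
  have hqi : q i = sq + i * d' + c * d := by linarith
  have hdpos : 0 < d := lt_trans hd'pos hd'd
  have hfdiv : Int.fdiv (q i - sq) d = c := by
    have h2 : q i - sq = i * d' + c * d := by linarith
    rw [h2, Int.fdiv_eq_ediv_of_nonneg _ hdpos.le, Int.add_mul_ediv_right _ _ hdpos.ne']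
    have h0 : i * d' / d = 0 := by
      apply Int.ediv_eq_zero_of_lt (by positivity)
      nlinarith
    rw [h0, zero_add]
  have hcmax : c ≤ hmax := hfdiv ▸ hmax' i hi0 hib
  have hcmin : hmin ≤ c := hfdiv ▸ hmin' i hi0 hib
  have key : s + sq + hmax * d + j * d' = (s + (hmax + a - c) * d) + q i := by
    rw [hqi]; linear_combination d' * hja - a * hdm
  rw [key]
  exact Set.add_mem_add ⟨hmax + a - c, by omega, by omega, rfl⟩ hqQ
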